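/- arXiv:2410.23525 — 4 statements merged into one kernel-verified Lean document; each statement's English description precedes it below -/
import Mathlib

section
/- With $U_{(k)} \sim \mathrm{Beta}(k, N_0+1-k)$ and $p_k$ the bootstrap weight probabilities defined by $p_k = \sum_{j=0}^{M-1}\binom{N_0}{j}[((k-1)/N_0)^j(1-(k-1)/N_0)^{N_0-j} - (k/N_0)^j(1-k/N_0)^{N_0-j}]$, the identity $\sum_{k=1}^{N_0} \mathrm{E}[U_{(k)}]\, p_k = \frac{1}{N_0+1}\sum_{k=1}^{N_0} \mathrm{P}(U_{(M)} \ge (k-1)/N_0)$ holds, where $\mathrm{E}[U_{(k)}] = k/(N_0+1)$. -/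
open Finset

lemma abel_aux (a : ℕ → ℝ) : ∀ n : ℕ,
    ∑ k ∈ Icc 1 n, (k : ℝ) * (a (k - 1) - a k)
      = ∑ k ∈ Icc 1 n, a (k - 1) - (n : ℝ) * a n := by
  intro n
  induction n with
  | zero => simp
  | succ n ih =>
      rw [Finset.sum_Icc_succ_top (Nat.one_le_iff_ne_zero.mpr (Nat.succ_ne_zero n)),
        Finset.sum_Icc_succ_top (Nat.one_le_iff_ne_zero.mpr (Nat.succ_ne_zero n)), ih]
      push_cast
      ring_nf

/-- With `E[U₍k₎] = k/(N₀+1)`, `a k := P(U₍M₎ ≥ k/N₀) = ∑_{j<M} C(N₀,j)(k/N₀)ʲ(1-k/N₀)^{N₀-j}`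
and `p k := a (k-1) - a k` the bootstrap weight probabilities, one has
`∑_{k=1}^{N₀} E[U₍k₎] p k = (N₀+1)⁻¹ ∑_{k=1}^{N₀} P(U₍M₎ ≥ (k-1)/N₀)`. -/
theorem stmt4 (N0 M : ℕ) (hM : 1 ≤ M) (hMN : M ≤ N0)
    (a : ℕ → ℝ) (p : ℕ → ℝ)
    (ha : ∀ k, a k = ∑ j ∈ range M, (N0.choose j : ℝ) * ((k : ℝ) / N0) ^ j
        * (1 - (k : ℝ) / N0) ^ (N0 - j))
    (hp : ∀ k, 1 ≤ k → p k = a (k - 1) - a k) :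
    ∑ k ∈ Icc 1 N0, ((k : ℝ) / (N0 + 1)) * p k
      = (1 / ((N0 : ℝ) + 1)) * ∑ k ∈ Icc 1 N0, a (k - 1) := by
  have hN0 : 1 ≤ N0 := le_trans hM hMN
  have haN : a N0 = 0 := by
    rw [ha]
    apply Finset.sum_eq_zero
    intro j hj
    rw [Finset.mem_range] at hj
    have hNne : (N0 : ℝ) ≠ 0 := by positivity
    have : (1 : ℝ) - (N0 : ℝ) / N0 = 0 := by field_simp; ring
    rw [this, zero_pow (by omega)]
    ring
  have key : ∑ k ∈ Icc 1 N0, (k : ℝ) * p k = ∑ k ∈ Icc 1 N0, a (k - 1) := by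
    rw [Finset.sum_congr rfl fun k hk => by
      rw [hp k (Finset.mem_Icc.mp hk).1]]
    rw [abel_aux, haN]
    ring
  calc ∑ k ∈ Icc 1 N0, ((k : ℝ) / (N0 + 1)) * p k
      = (1 / ((N0 : ℝ) + 1)) * ∑ k ∈ Icc 1 N0, (k : ℝ) * p k := by
        rw [Finset.mul_sum]; exact Finset.sum_congr rfl fun k _ => by ring
    _ = (1 / ((N0 : ℝ) + 1)) * ∑ k ∈ Icc 1 N0, a (k - 1) := by rw [key]
end

section
/- (Bootstrap Slutsky) On a product probability space, suppose $Q_n$ and $R_n$ are random variables such that $\sup_{t}|\mathrm{P}_{W|O}(Q_n \le t) - F(t)| \to 0$ in $\mathrm{P}_O$-probability for a continuous CDF $F$, and $R_n = o_{\mathrm{P}_W}(1)$ in $\mathrm{P}_O$-probability. Then $\sup_t |\mathrm{P}_{W|O}(Q_n + R_n \le t) - F(t)| \to 0$ in $\mathrm{P}_O$-probability. -/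
open MeasureTheory Filter

/-- A continuous monotone function with limits 0 and 1 at `∓∞` admits a uniform
modulus: for any `η > 0` there is `ε > 0` with `F (t+ε) - F (t-ε) ≤ η` for all `t`. -/
lemma modulus_aux {F : ℝ → ℝ} (hFc : Continuous F) (hFmono : Monotone F)
    (hF0 : Tendsto F atBot (nhds 0)) (hF1 : Tendsto F atTop (nhds 1))
    {η : ℝ} (hη : 0 < η) :
    ∃ ε > 0, ∀ t : ℝ, F (t + ε) - F (t - ε) ≤ η := by
  have h0 : ∀ x, 0 ≤ F x := fun x => hFmono.le_of_tendsto hF0 x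
  have h1 : ∀ x, F x ≤ 1 := fun x => hFmono.ge_of_tendsto hF1 x
  obtain ⟨a, ha⟩ := (eventually_atBot).1 (hF0.eventually_lt_const (show (0:ℝ) < η/2 by linarith))
  obtain ⟨b, hb⟩ := (eventually_atTop).1 (hF1.eventually_const_lt (show 1 - η/2 < 1 by linarith))
  have hK : IsCompact (Set.Icc (a-2) (b+2)) := isCompact_Icc
  have hUC : UniformContinuousOn F (Set.Icc (a-2) (b+2)) :=
    hK.uniformContinuousOn_of_continuous hFc.continuousOn
  rw [Metric.uniformContinuousOn_iff] at hUC
  obtain ⟨εc, hεc, hmod⟩ := hUC (η/2) (by linarith)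
  refine ⟨min (εc/4) 1, by positivity, fun t => ?_⟩
  set ε := min (εc/4) 1 with hεdef
  have hε1 : ε ≤ 1 := min_le_right _ _
  have hεc4 : ε ≤ εc/4 := min_le_left _ _
  have hεpos : 0 < ε := by positivity
  rcases le_or_gt t (a-1) with h | h
  · have h2 : F (t + ε) < η/2 := ha _ (by linarith)
    have h3 := h0 (t - ε)
    linarith
  rcases le_or_gt (b+1) t with h' | h'
  · have h2 : 1 - η/2 < F (t - ε) := hb _ (by linarith)
    have h3 := h1 (t + ε)
    linarith
  · have hx : t + ε ∈ Set.Icc (a-2) (b+2) := ⟨by linarith, by linarith⟩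
    have hy : t - ε ∈ Set.Icc (a-2) (b+2) := ⟨by linarith, by linarith⟩
    have hd : dist (t+ε) (t-ε) < εc := by
      rw [Real.dist_eq, abs_of_nonneg (by linarith)]
      linarith
    have h2 := hmod _ hx _ hy hd
    rw [Real.dist_eq] at h2
    have h3 := le_abs_self (F (t+ε) - F (t-ε))
    linarith

/-- Bootstrap Slutsky: if the conditional bootstrap distribution of `Qₙ`
converges uniformly to a continuous CDF `F` in `P_O`-probability, and `Rₙ = o_{P_W}(1)` in
`P_O`-probability, then the conditional distribution of `Qₙ + Rₙ` also converges uniformly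
to `F` in `P_O`-probability. -/
theorem stmt15 {ΩO ΩW : Type*} [MeasurableSpace ΩO] [MeasurableSpace ΩW]
    (μO : Measure ΩO) (μW : Measure ΩW)
    [IsProbabilityMeasure μO] [IsProbabilityMeasure μW]
    (Q R : ℕ → ΩO × ΩW → ℝ) (hQm : ∀ n, Measurable (Q n)) (hRm : ∀ n, Measurable (R n))
    (F : ℝ → ℝ) (hFc : Continuous F) (hFmono : Monotone F)
    (hF0 : Tendsto F atBot (nhds 0)) (hF1 : Tendsto F atTop (nhds 1))
    (hQ : ∀ δ : ℝ, 0 < δ →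
      Tendsto (fun n => μO {ωO |
        δ < ⨆ t : ℝ, |(μW {ωW | Q n (ωO, ωW) ≤ t}).toReal - F t|}) atTop (nhds 0))
    (hR : ∀ ε δ : ℝ, 0 < ε → 0 < δ →
      Tendsto (fun n => μO {ωO |
        δ < (μW {ωW | ε < |R n (ωO, ωW)|}).toReal}) atTop (nhds 0)) :
    ∀ δ : ℝ, 0 < δ →
      Tendsto (fun n => μO {ωO |
        δ < ⨆ t : ℝ, |(μW {ωW | Q n (ωO, ωW) + R n (ωO, ωW) ≤ t}).toReal - F t|})
        atTop (nhds 0) := by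
  intro δ hδ
  obtain ⟨ε, hεpos, hmod⟩ := modulus_aux hFc hFmono hF0 hF1 (show (0:ℝ) < δ/4 by linarith)
  have hδ38 : (0:ℝ) < 3*δ/8 := by linarith
  have hQ' := hQ (3*δ/8) hδ38
  have hR' := hR ε (3*δ/8) hεpos hδ38
  have hF0' : ∀ x, 0 ≤ F x := fun x => hFmono.le_of_tendsto hF0 x
  have hF1' : ∀ x, F x ≤ 1 := fun x => hFmono.ge_of_tendsto hF1 x
  have htr : ∀ s : Set ΩW, (μW s).toReal ≤ 1 := fun s => by
    simpa using ENNReal.toReal_mono ENNReal.one_ne_top prob_le_one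
  have key : ∀ n, μO {ωO |
      δ < ⨆ t : ℝ, |(μW {ωW | Q n (ωO, ωW) + R n (ωO, ωW) ≤ t}).toReal - F t|}
      ≤ μO {ωO | 3*δ/8 < ⨆ t : ℝ, |(μW {ωW | Q n (ωO, ωW) ≤ t}).toReal - F t|}
        + μO {ωO | 3*δ/8 < (μW {ωW | ε < |R n (ωO, ωW)|}).toReal} := by
    intro n
    refine le_trans (measure_mono ?_) (measure_union_le _ _)
    intro ωO hωO
    simp only [Set.mem_setOf_eq] at hωO
    by_contra hcon
    simp only [Set.mem_union, Set.mem_setOf_eq] at hcon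
    push_neg at hcon
    obtain ⟨hA, hB⟩ := hcon
    set q : ℝ → ℝ := fun s => (μW {ωW | Q n (ωO, ωW) ≤ s}).toReal with hq
    set aT : ℝ → ℝ := fun t =>
      (μW {ωW | Q n (ωO, ωW) + R n (ωO, ωW) ≤ t}).toReal with haT
    set bR : ℝ := (μW {ωW | ε < |R n (ωO, ωW)|}).toReal with hbR
    have hbdd : BddAbove (Set.range fun s => |q s - F s|) := by
      refine ⟨2, ?_⟩
      rintro x ⟨s, rfl⟩
      have h1 : q s ≤ 1 := htr _
      have h2 : 0 ≤ q s := ENNReal.toReal_nonneg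
      rw [abs_sub_le_iff]
      constructor <;> [linarith [hF0' s]; linarith [hF1' s]]
    have hqA : ∀ s, |q s - F s| ≤ ⨆ t : ℝ, |q t - F t| := fun s => le_ciSup hbdd s
    -- measure inequalities
    have hto : ∀ (S T U : Set ΩW), S ⊆ T ∪ U →
        (μW S).toReal ≤ (μW T).toReal + (μW U).toReal := by
      intro S T U hsub
      rw [← ENNReal.toReal_add (measure_ne_top _ _) (measure_ne_top _ _)]
      exact ENNReal.toReal_mono
        (ENNReal.add_ne_top.2 ⟨measure_ne_top _ _, measure_ne_top _ _⟩)
        ((measure_mono hsub).trans (measure_union_le _ _))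
    have bound : ∀ t : ℝ, |aT t - F t| ≤ (⨆ s : ℝ, |q s - F s|) + bR + δ/4 := by
      intro t
      have hup : aT t ≤ q (t + ε) + bR := by
        refine hto _ _ _ ?_
        intro ωW hωW
        simp only [Set.mem_setOf_eq] at hωW
        by_cases hr : ε < |R n (ωO, ωW)|
        · exact Or.inr hr
        · left
          push_neg at hr
          have := abs_le.1 hr
          simp only [Set.mem_setOf_eq]
          linarith
      have hlo : q (t - ε) ≤ aT t + bR := by
        refine hto _ _ _ ?_
        intro ωW hωW
        simp only [Set.mem_setOf_eq] at hωW
        by_cases hr : ε < |R n (ωO, ωW)|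
        · exact Or.inr hr
        · left
          push_neg at hr
          have := abs_le.1 hr
          simp only [Set.mem_setOf_eq]
          linarith
      have h1 := abs_le.1 (hqA (t + ε))
      have h2 := abs_le.1 (hqA (t - ε))
      have hm := hmod t
      have hm1 : F (t - ε) ≤ F t := hFmono (by linarith)
      have hm2 : F t ≤ F (t + ε) := hFmono (by linarith)
      rw [abs_le]
      constructor <;> linarith
    have hsup : (⨆ t : ℝ, |aT t - F t|) ≤ (⨆ s : ℝ, |q s - F s|) + bR + δ/4 :=
      ciSup_le bound
    have : (⨆ t : ℝ, |aT t - F t|) ≤ δ := by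
      have hbR0 : 0 ≤ bR := ENNReal.toReal_nonneg
      linarith
    exact absurd hωO (not_lt.2 this)
  have hsum : Tendsto (fun n =>
      μO {ωO | 3*δ/8 < ⨆ t : ℝ, |(μW {ωW | Q n (ωO, ωW) ≤ t}).toReal - F t|}
      + μO {ωO | 3*δ/8 < (μW {ωW | ε < |R n (ωO, ωW)|}).toReal}) atTop (nhds 0) := by
    simpa using hQ'.add hR'
  exact tendsto_of_tendsto_of_tendsto_of_le_of_le tendsto_const_nhds hsum
    (fun n => zero_le) key
end

section
/- (Marcinkiewicz–Zygmund SLLN, case $0<p<1$) Let $\{X_i\}$ be i.i.d. real random variables with $\mathrm{E}[|X_1|^p] < \infty$ for some $0 < p < 1$. Then $S_n / n^{1/p} \to 0$ almost surely, where $S_n = \sum_{i=1}^n X_i$. -/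
open MeasureTheory Filter Finset

private lemma stmt16_rpow_add {p a b : ℝ} (hp0 : 0 ≤ p) (hp1 : p ≤ 1)
    (ha : 0 ≤ a) (hb : 0 ≤ b) : (a + b) ^ p ≤ a ^ p + b ^ p := by
  have h := NNReal.rpow_add_le_add_rpow (⟨a, ha⟩ : NNReal) (⟨b, hb⟩ : NNReal) hp0 hp1
  have h' := NNReal.coe_le_coe.2 h
  push_cast [NNReal.coe_rpow] at h'
  exact h'

private lemma stmt16_sum_rpow {p : ℝ} (hp0 : 0 < p) (hp1 : p ≤ 1)
    (s : Finset ℕ) (f : ℕ → ℝ) (hf : ∀ i, 0 ≤ f i) :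
    (∑ i ∈ s, f i) ^ p ≤ ∑ i ∈ s, f i ^ p := by
  induction s using Finset.induction with
  | empty => simp [Real.zero_rpow hp0.ne']
  | @insert a s h ih =>
    rw [Finset.sum_insert h, Finset.sum_insert h]
    calc (f a + ∑ i ∈ s, f i) ^ p ≤ f a ^ p + (∑ i ∈ s, f i) ^ p :=
          stmt16_rpow_add hp0.le hp1 (hf a) (Finset.sum_nonneg fun i _ => hf i)
      _ ≤ f a ^ p + ∑ i ∈ s, f i ^ p := by linarith

/-- Marcinkiewicz–Zygmund SLLN, case `0 < p < 1`: if `{Xᵢ}` are i.i.d. with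
`E[|X₁|^p] < ∞` for some `0 < p < 1`, then `Sₙ / n^{1/p} → 0` almost surely. -/
theorem stmt16 {Ω : Type*} [MeasurableSpace Ω] (μ : Measure Ω) [IsProbabilityMeasure μ]
    (p : ℝ) (hp0 : 0 < p) (hp1 : p < 1)
    (X : ℕ → Ω → ℝ) (hmeas : ∀ i, Measurable (X i))
    (hindep : ProbabilityTheory.iIndepFun X μ)
    (hident : ∀ i, μ.map (X i) = μ.map (X 0))
    (hmom : ∫⁻ ω, ENNReal.ofReal (|X 0 ω| ^ p) ∂μ < ⊤) :
    ∀ᵐ ω ∂μ, Tendsto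
      (fun n => (∑ i ∈ range n, X i ω) / (n : ℝ) ^ (1 / p)) atTop (nhds 0) := by
  have hpinv : (0:ℝ) < 1 / p := by positivity
  -- the function |X 0|^p is integrable
  set f0 : Ω → ℝ := fun ω => |X 0 ω| ^ p with hf0def
  have hf0nonneg : ∀ ω, 0 ≤ f0 ω := fun ω => Real.rpow_nonneg (abs_nonneg _) _
  have hf0meas : Measurable f0 :=
    (Real.continuous_rpow_const hp0.le).measurable.comp (hmeas 0).abs
  have hint0 : Integrable f0 μ := by
    refine ⟨hf0meas.aestronglyMeasurable, ?_⟩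
    rw [hasFiniteIntegral_iff_ofReal (ae_of_all _ hf0nonneg)]
    exact hmom
  -- truncated p-th powers
  set g : ℕ → ℝ → ℝ := fun K x => if (K:ℝ) < |x| then |x| ^ p else 0 with hgdef
  have hgmeas : ∀ K : ℕ, Measurable (g K) := by
    intro K
    exact Measurable.ite (measurableSet_lt measurable_const measurable_abs)
      ((Real.continuous_rpow_const hp0.le).measurable.comp measurable_abs) measurable_const
  have hgnonneg : ∀ K x, 0 ≤ g K x := by
    intro K x
    simp only [hgdef]
    split_ifs
    · exact Real.rpow_nonneg (abs_nonneg _) _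
    · exact le_refl 0
  have hgle : ∀ K ω, g K (X 0 ω) ≤ f0 ω := by
    intro K ω
    simp only [hgdef, hf0def]
    split_ifs
    · exact le_refl _
    · exact hf0nonneg ω
  have hgbound : ∀ K : ℕ, ∀ ω, ‖g K (X 0 ω)‖ ≤ f0 ω := by
    intro K ω
    rw [Real.norm_eq_abs, abs_of_nonneg (hgnonneg K _)]
    exact hgle K ω
  have hgint : ∀ K : ℕ, Integrable (fun ω => g K (X 0 ω)) μ :=
    fun K => hint0.mono' ((hgmeas K).comp (hmeas 0)).aestronglyMeasurable
      (ae_of_all _ (hgbound K))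
  -- strong law for the truncated variables
  have hident' : ∀ i, ProbabilityTheory.IdentDistrib (X i) (X 0) μ μ :=
    fun i => ⟨(hmeas i).aemeasurable, (hmeas 0).aemeasurable, hident i⟩
  have hSLLN : ∀ K : ℕ, ∀ᵐ ω ∂μ, Tendsto
      (fun n : ℕ => (∑ i ∈ range n, g K (X i ω)) / n) atTop
      (nhds (∫ ω, g K (X 0 ω) ∂μ)) := by
    intro K
    have h1 := ProbabilityTheory.strong_law_ae_real (fun i => g K ∘ X i) (hgint K)
      (fun i j hij => ((hindep.comp (fun _ => g K) (fun _ => hgmeas K)).indepFun hij))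
      (fun i => (hident' i).comp (hgmeas K))
    exact h1
  set I : ℕ → ℝ := fun K => ∫ ω, g K (X 0 ω) ∂μ with hIdef
  -- I K → 0 by dominated convergence
  have hIlim : Tendsto I atTop (nhds 0) := by
    have h := tendsto_integral_filter_of_dominated_convergence (μ := μ) (l := atTop)
      (F := fun K ω => g K (X 0 ω)) (f := fun _ => (0:ℝ)) f0
      (Eventually.of_forall fun K => ((hgmeas K).comp (hmeas 0)).aestronglyMeasurable)
      (Eventually.of_forall fun K => ae_of_all _ (hgbound K)) hint0
      (ae_of_all _ ?_)
    · simpa using h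
    · intro ω
      apply tendsto_nhds_of_eventually_eq
      have : ∀ᶠ K : ℕ in atTop, |X 0 ω| ≤ (K:ℝ) :=
        tendsto_natCast_atTop_atTop.eventually_ge_atTop (|X 0 ω|)
      filter_upwards [this] with K hK
      simp only [hgdef, if_neg (not_lt.2 hK)]
  have hI1p : Tendsto (fun K => (I K) ^ (1/p)) atTop (nhds 0) := by
    have hc : ContinuousAt (fun x : ℝ => x ^ (1/p)) 0 :=
      Real.continuousAt_rpow_const 0 (1/p) (Or.inr hpinv.le)
    have := hc.tendsto.comp hIlim
    rw [Real.zero_rpow hpinv.ne'] at this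
    exact this
  -- main a.e. argument
  have hae : ∀ᵐ ω ∂μ, ∀ K : ℕ, Tendsto
      (fun n : ℕ => (∑ i ∈ range n, g K (X i ω)) / n) atTop (nhds (I K)) :=
    ae_all_iff.2 hSLLN
  filter_upwards [hae] with ω hω
  rw [NormedAddCommGroup.tendsto_nhds_zero]
  intro ε hε
  obtain ⟨K, hK⟩ : ∃ K : ℕ, (I K) ^ (1/p) < ε := (hI1p.eventually_lt_const hε).exists
  -- the dominating sequence converges to (I K)^(1/p)
  have hb : Tendsto (fun n : ℕ => (K:ℝ) * ((n:ℝ) / (n:ℝ) ^ (1/p)) +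
      ((∑ i ∈ range n, g K (X i ω)) / n) ^ (1/p)) atTop
      (nhds ((K:ℝ) * 0 + (I K) ^ (1/p))) := by
    apply Tendsto.add
    · apply Tendsto.const_mul
      have h1 : Tendsto (fun x : ℝ => x ^ (-(1/p - 1))) atTop (nhds 0) :=
        tendsto_rpow_neg_atTop (by rw [lt_sub_iff_add_lt, zero_add]; exact (one_lt_div hp0).2 hp1)
      have h2 : Tendsto (fun n : ℕ => ((n:ℝ)) ^ (-(1/p - 1))) atTop (nhds 0) :=
        h1.comp tendsto_natCast_atTop_atTop
      apply h2.congr'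
      filter_upwards [eventually_ge_atTop 1] with n hn
      have hn0 : (0:ℝ) < n := by exact_mod_cast hn
      rw [neg_sub, Real.rpow_sub hn0, Real.rpow_one]
    · have hc : ContinuousAt (fun x : ℝ => x ^ (1/p)) (I K) :=
        Real.continuousAt_rpow_const _ (1/p) (Or.inr hpinv.le)
      exact hc.tendsto.comp (hω K)
  have hlt : ∀ᶠ n : ℕ in atTop, (K:ℝ) * ((n:ℝ) / (n:ℝ) ^ (1/p)) +
      ((∑ i ∈ range n, g K (X i ω)) / n) ^ (1/p) < ε :=
    hb.eventually_lt_const (by simpa using hK)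
  filter_upwards [hlt, eventually_ge_atTop 1] with n hn hn1
  have hn0 : (0:ℝ) < n := by exact_mod_cast hn1
  have hnp : (0:ℝ) < (n:ℝ) ^ (1/p) := Real.rpow_pos_of_pos hn0 _
  rw [Real.norm_eq_abs, abs_div, abs_of_pos hnp]
  refine lt_of_le_of_lt ?_ hn
  -- bound on the truncated part of the sum
  set T : ℝ := ∑ i ∈ range n, (if (K:ℝ) < |X i ω| then |X i ω| else 0) with hTdef
  have hTnn : 0 ≤ T := Finset.sum_nonneg fun i _ => by
    split_ifs
    · exact abs_nonneg _
    · exact le_refl 0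
  have hTle : T ≤ (∑ i ∈ range n, g K (X i ω)) ^ (1/p) := by
    have h1 : T ^ p ≤ ∑ i ∈ range n, g K (X i ω) := by
      refine le_trans (stmt16_sum_rpow hp0 hp1.le _ _ ?_) (Finset.sum_le_sum fun i _ => ?_)
      · intro i
        split_ifs
        · exact abs_nonneg _
        · exact le_refl 0
      · simp only [hgdef]
        split_ifs
        · exact le_refl _
        · rw [Real.zero_rpow hp0.ne']
    calc T = (T ^ p) ^ p⁻¹ := (Real.rpow_rpow_inv hTnn hp0.ne').symm
      _ ≤ (∑ i ∈ range n, g K (X i ω)) ^ p⁻¹ :=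
        Real.rpow_le_rpow (Real.rpow_nonneg hTnn _) h1 (by positivity)
      _ = (∑ i ∈ range n, g K (X i ω)) ^ (1/p) := by rw [one_div]
  have hSsum : |∑ i ∈ range n, X i ω| ≤
      (n:ℝ) * K + (∑ i ∈ range n, g K (X i ω)) ^ (1/p) := by
    calc |∑ i ∈ range n, X i ω| ≤ ∑ i ∈ range n, |X i ω| :=
          Finset.abs_sum_le_sum_abs _ _
      _ ≤ ∑ i ∈ range n, ((K:ℝ) + (if (K:ℝ) < |X i ω| then |X i ω| else 0)) := by
          refine Finset.sum_le_sum fun i _ => ?_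
          split_ifs with h
          · have : (0:ℝ) ≤ K := Nat.cast_nonneg K
            linarith
          · push_neg at h
            linarith
      _ = (n:ℝ) * K + T := by
          rw [Finset.sum_add_distrib, Finset.sum_const, card_range, nsmul_eq_mul]
      _ ≤ (n:ℝ) * K + (∑ i ∈ range n, g K (X i ω)) ^ (1/p) := by linarith
  have hZnn : 0 ≤ ∑ i ∈ range n, g K (X i ω) :=
    Finset.sum_nonneg fun i _ => hgnonneg K _
  calc |∑ i ∈ range n, X i ω| / (n:ℝ) ^ (1/p)
      ≤ ((n:ℝ) * K + (∑ i ∈ range n, g K (X i ω)) ^ (1/p)) / (n:ℝ) ^ (1/p) := by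
        gcongr
    _ = (K:ℝ) * ((n:ℝ) / (n:ℝ) ^ (1/p)) +
        ((∑ i ∈ range n, g K (X i ω)) / n) ^ (1/p) := by
        rw [add_div, Real.div_rpow hZnn hn0.le]
        ring
end

section
/- For positive integers $M \le N_0$ and real $\xi > 0$, setting $K = \lceil (1+\xi)M \rceil$, the upper tail probability satisfies $\mathrm{P}(U_{(M)} > K/N_0) \le \exp\Big\{ \frac{-\xi M}{\frac{3}{\xi}\big[\frac{N_0}{N_0+1}(1 - \frac{M}{N_0+1})\big] + 3} \Big\}$, where $U_{(M)}$ is the $M$-th order statistic of $N_0$ i.i.d. uniform $[0,1]$ random variables. -/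
open MeasureTheory Finset

/-! Auxiliary lemmas -/

lemma my_exp_tsum (x : ℝ) : Real.exp x = ∑' n : ℕ, x ^ n / (Nat.factorial n) := by
  rw [Real.exp_eq_exp_ℝ, NormedSpace.exp_eq_tsum_div]

lemma my_exp_tail (x : ℝ) :
    (∑' n : ℕ, x ^ (n+2) / (Nat.factorial (n+2))) = Real.exp x - 1 - x := by
  have h := Summable.sum_add_tsum_nat_add 2 (Real.summable_pow_div_factorial x)
  rw [my_exp_tsum x]
  simp [Finset.sum_range_succ, Nat.factorial] at h ⊢
  linarith [h]

lemma my_L_series {a t : ℝ} (ha : |a| ≤ 1) (ht : 0 ≤ t) :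
    Real.exp (a*t) ≤ 1 + a*t + a^2 * (Real.exp t - 1 - t) := by
  have hs1 : Summable (fun n : ℕ => (a*t) ^ (n+2) / (Nat.factorial (n+2))) :=
    (summable_nat_add_iff 2).mpr (Real.summable_pow_div_factorial (a*t))
  have hs2 : Summable (fun n : ℕ => a^2 * (t ^ (n+2) / (Nat.factorial (n+2)))) :=
    ((summable_nat_add_iff 2).mpr (Real.summable_pow_div_factorial t)).mul_left _
  have hterm : ∀ n : ℕ, (a*t) ^ (n+2) / (Nat.factorial (n+2)) ≤
      a^2 * (t ^ (n+2) / (Nat.factorial (n+2))) := by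
    intro n
    rw [mul_div_assoc']
    apply div_le_div_of_nonneg_right ?_ (by positivity)
    calc (a*t)^(n+2) ≤ |(a*t)^(n+2)| := le_abs_self _
      _ = |a|^(n+2) * t^(n+2) := by rw [abs_pow, abs_mul, mul_pow, abs_of_nonneg ht]
      _ ≤ |a|^2 * t^(n+2) := by
          exact mul_le_mul_of_nonneg_right
            (pow_le_pow_of_le_one (abs_nonneg a) ha (by omega)) (by positivity)
      _ = a^2 * t^(n+2) := by rw [sq_abs]
  have h2 := Summable.tsum_le_tsum hterm hs1 hs2
  rw [my_exp_tail (a*t), tsum_mul_left, my_exp_tail t] at h2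
  linarith [h2]

lemma my_fact_ge (n : ℕ) : 2 * 3^n ≤ Nat.factorial (n+2) := by
  induction n with
  | zero => simp [Nat.factorial]
  | succ k ih =>
    have h1 : Nat.factorial (k+3) = (k+3) * Nat.factorial (k+2) := rfl
    rw [show k+1+2 = k+3 from rfl, h1, pow_succ]
    calc 2*(3^k*3) = 3*(2*3^k) := by ring
      _ ≤ 3*(Nat.factorial (k+2)) := by omega
      _ ≤ (k+3)*(Nat.factorial (k+2)) := Nat.mul_le_mul_right _ (by omega)

lemma my_L_geom {t : ℝ} (ht : 0 ≤ t) (ht3 : t < 3) :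
    Real.exp t - 1 - t ≤ t^2/(2*(1-t/3)) := by
  have h3 : (0:ℝ) < 1 - t/3 := by linarith
  have hterm : ∀ n : ℕ, t ^ (n+2) / (Nat.factorial (n+2)) ≤ t^2/2 * (t/3)^n := by
    intro n
    have hf : (2 * 3^n : ℝ) ≤ (Nat.factorial (n+2) : ℝ) := by exact_mod_cast my_fact_ge n
    calc t^(n+2)/((Nat.factorial (n+2)):ℝ) ≤ t^(n+2)/(2*3^n) :=
          div_le_div_of_nonneg_left (by positivity) (by positivity) hf
      _ = t^2/2*(t/3)^n := by rw [div_pow, pow_add]; field_simp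
  have hs1 : Summable (fun n : ℕ => t ^ (n+2) / (Nat.factorial (n+2))) :=
    (summable_nat_add_iff 2).mpr (Real.summable_pow_div_factorial t)
  have hs2 : Summable (fun n : ℕ => t^2/2 * (t/3)^n) :=
    (summable_geometric_of_lt_one (by positivity) (by linarith)).mul_left _
  have h2 := Summable.tsum_le_tsum hterm hs1 hs2
  rw [my_exp_tail t, tsum_mul_left,
    tsum_geometric_of_lt_one (by positivity) (by linarith)] at h2
  calc Real.exp t - 1 - t ≤ t^2/2 * (1-t/3)⁻¹ := h2
    _ = t^2/(2*(1-t/3)) := by field_simp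

lemma my_mgf_factor_bound {p t : ℝ} (hp0 : 0 ≤ p) (hp1 : p ≤ 1) (ht : 0 ≤ t) :
    (1-p) + p * Real.exp (-t) ≤
      Real.exp (-(p*t) + p*(1-p)*(Real.exp t - 1 - t)) := by
  set G := Real.exp t - 1 - t with hGdef
  have hG : 0 ≤ G := by
    have := Real.add_one_le_exp t
    simp only [hGdef]; linarith
  have h1 : Real.exp (p*t) ≤ 1 + p*t + p^2 * G :=
    my_L_series (abs_le.mpr ⟨by linarith, hp1⟩) ht
  have h2 : Real.exp (-((1-p)*t)) ≤ 1 - (1-p)*t + (1-p)^2 * G := by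
    have := my_L_series (a := -(1-p)) (abs_le.mpr ⟨by linarith, by linarith⟩) ht
    calc Real.exp (-((1-p)*t)) = Real.exp ((-(1-p))*t) := by ring_nf
      _ ≤ 1 + (-(1-p))*t + (-(1-p))^2 * G := this
      _ = 1 - (1-p)*t + (1-p)^2 * G := by ring
  have key : (1-p)*Real.exp (p*t) + p*Real.exp (-((1-p)*t)) ≤ 1 + p*(1-p)*G := by
    have e1 := mul_le_mul_of_nonneg_left h1 (by linarith : (0:ℝ) ≤ 1-p)
    have e2 := mul_le_mul_of_nonneg_left h2 hp0
    nlinarith [e1, e2]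
  have comp1 : Real.exp (-(p*t)) * Real.exp (p*t) = 1 := by
    rw [← Real.exp_add]; simp
  have comp2 : Real.exp (-(p*t)) * Real.exp (-((1-p)*t)) = Real.exp (-t) := by
    rw [← Real.exp_add]; congr 1; ring
  have expand : (1-p) + p * Real.exp (-t) =
      Real.exp (-(p*t)) * ((1-p)*Real.exp (p*t) + p*Real.exp (-((1-p)*t))) := by
    rw [mul_add, show Real.exp (-(p*t)) * ((1-p)*Real.exp (p*t)) =
      (1-p) * (Real.exp (-(p*t)) * Real.exp (p*t)) from by ring, comp1,
      show Real.exp (-(p*t)) * (p*Real.exp (-((1-p)*t))) =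
      p * (Real.exp (-(p*t)) * Real.exp (-((1-p)*t))) from by ring, comp2]
    ring
  rw [expand, Real.exp_add]
  apply mul_le_mul_of_nonneg_left _ (Real.exp_pos _).le
  calc (1-p)*Real.exp (p*t) + p*Real.exp (-((1-p)*t)) ≤ 1 + p*(1-p)*G := key
    _ ≤ Real.exp (p*(1-p)*G) := by
        have := Real.add_one_le_exp (p*(1-p)*G)
        linarith

set_option maxHeartbeats 2000000 in
lemma my_poly2 (ξ m n : ℝ) (hξ : 0 < ξ) (hm : 1 ≤ m) (hn : (1+ξ)*m + 1 ≤ n) :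
    2*ξ*((1+ξ)*m+1)*(n-(1+ξ)*m)*(n+1)^2 ≤
      (3*n^2*(n+1-m) + (7/3)*ξ*n*(n+1)^2)*(ξ*m+1) := by
  obtain ⟨u, hu, rfl⟩ : ∃ u, 0 ≤ u ∧ m = 1 + u := ⟨m - 1, by linarith, by ring⟩
  obtain ⟨w, hw, rfl⟩ : ∃ w, 0 ≤ w ∧ n = (1+ξ)*(1+u) + 1 + w :=
    ⟨n - ((1+ξ)*(1+u) + 1), by linarith, by ring⟩
  have key : (3*((1+ξ)*(1+u)+1+w)^2*(((1+ξ)*(1+u)+1+w)+1-(1+u)) + (7/3)*ξ*((1+ξ)*(1+u)+1+w)*(((1+ξ)*(1+u)+1+w)+1)^2)*(ξ*(1+u)+1)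
      - 2*ξ*((1+ξ)*(1+u)+1)*(((1+ξ)*(1+u)+1+w)-(1+ξ)*(1+u))*(((1+ξ)*(1+u)+1+w)+1)^2 =
      24 + 36*w^1 + 18*w^2 + 3*w^3 + 24*u^1 + 24*u^1*w^1 + 6*u^1*w^2 + 6*u^2 + 3*u^2*w^1 + 66*ξ^1 + 61*ξ^1*w^1 + (53/3:ℝ)*ξ^1*w^2 + (4/3:ℝ)*ξ^1*w^3 + 115*ξ^1*u^1 + (250/3:ℝ)*ξ^1*u^1*w^1 + 18*ξ^1*u^1*w^2 + 1*ξ^1*u^1*w^3 + (179/3:ℝ)*ξ^1*u^2 + 26*ξ^1*u^2*w^1 + 2*ξ^1*u^2*w^2 + (28/3:ℝ)*ξ^1*u^3 + 1*ξ^1*u^3*w^1 + 103*ξ^2 + (208/3:ℝ)*ξ^2*w^1 + (38/3:ℝ)*ξ^2*w^2 + (1/3:ℝ)*ξ^2*w^3 + (724/3:ℝ)*ξ^2*u^1 + (413/3:ℝ)*ξ^2*u^1*w^1 + (62/3:ℝ)*ξ^2*u^1*w^2 + (1/3:ℝ)*ξ^2*u^1*w^3 + 191*ξ^2*u^2 +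 (244/3:ℝ)*ξ^2*u^2*w^1 + 8*ξ^2*u^2*w^2 + 58*ξ^2*u^3 + 13*ξ^2*u^3*w^1 + (16/3:ℝ)*ξ^2*u^4 + (218/3:ℝ)*ξ^3 + (100/3:ℝ)*ξ^3*w^1 + 3*ξ^3*w^2 + (632/3:ℝ)*ξ^3*u^1 + (251/3:ℝ)*ξ^3*u^1*w^1 + 6*ξ^3*u^1*w^2 + (649/3:ℝ)*ξ^3*u^2 + (202/3:ℝ)*ξ^3*u^2*w^1 + 3*ξ^3*u^2*w^2 + (274/3:ℝ)*ξ^3*u^3 + 17*ξ^3*u^3*w^1 + 13*ξ^3*u^4 + 22*ξ^4 + 5*ξ^4*w^1 + 76*ξ^4*u^1 + 15*ξ^4*u^1*w^1 + 96*ξ^4*u^2 + 15*ξ^4*u^2*w^1 + 52*ξ^4*u^3 + 5*ξ^4*u^3*w^1 + 10*ξ^4*u^4 + (7/3:ℝ)*ξ^5 + (28/3:ℝ)*ξ^5*u^1 + 14*ξ^5*u^2 + (28/3:ℝ)*ξ^5*u^3 + (7/3:ℝ)*ξ^5*u^4 := by ring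
  have pos : (0:ℝ) ≤ 24 + 36*w^1 + 18*w^2 + 3*w^3 + 24*u^1 + 24*u^1*w^1 + 6*u^1*w^2 + 6*u^2 + 3*u^2*w^1 + 66*ξ^1 + 61*ξ^1*w^1 + (53/3:ℝ)*ξ^1*w^2 + (4/3:ℝ)*ξ^1*w^3 + 115*ξ^1*u^1 + (250/3:ℝ)*ξ^1*u^1*w^1 + 18*ξ^1*u^1*w^2 + 1*ξ^1*u^1*w^3 + (179/3:ℝ)*ξ^1*u^2 + 26*ξ^1*u^2*w^1 + 2*ξ^1*u^2*w^2 + (28/3:ℝ)*ξ^1*u^3 + 1*ξ^1*u^3*w^1 + 103*ξ^2 + (208/3:ℝ)*ξ^2*w^1 + (38/3:ℝ)*ξ^2*w^2 + (1/3:ℝ)*ξ^2*w^3 + (724/3:ℝ)*ξ^2*u^1 + (413/3:ℝ)*ξ^2*u^1*w^1 + (62/3:ℝ)*ξ^2*u^1*w^2 + (1/3:ℝ)*ξ^2*u^1*w^3 + 191*ξ^2*u^2 + (244/3:ℝ)*ξ^2*u^2*w^1 + 8*ξ^2*u^2*w^2 + 58*ξ^2*u^3 + 13*ξ^2*u^3*w^1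 + (16/3:ℝ)*ξ^2*u^4 + (218/3:ℝ)*ξ^3 + (100/3:ℝ)*ξ^3*w^1 + 3*ξ^3*w^2 + (632/3:ℝ)*ξ^3*u^1 + (251/3:ℝ)*ξ^3*u^1*w^1 + 6*ξ^3*u^1*w^2 + (649/3:ℝ)*ξ^3*u^2 + (202/3:ℝ)*ξ^3*u^2*w^1 + 3*ξ^3*u^2*w^2 + (274/3:ℝ)*ξ^3*u^3 + 17*ξ^3*u^3*w^1 + 13*ξ^3*u^4 + 22*ξ^4 + 5*ξ^4*w^1 + 76*ξ^4*u^1 + 15*ξ^4*u^1*w^1 + 96*ξ^4*u^2 + 15*ξ^4*u^2*w^1 + 52*ξ^4*u^3 + 5*ξ^4*u^3*w^1 + 10*ξ^4*u^4 + (7/3:ℝ)*ξ^5 + (28/3:ℝ)*ξ^5*u^1 + 14*ξ^5*u^2 + (28/3:ℝ)*ξ^5*u^3 + (7/3:ℝ)*ξ^5*u^4 := by positivity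
  linarith [key, pos]

set_option maxHeartbeats 2000000 in
lemma my_bernstein_exponent_ineq {ξ m k n : ℝ} (hξ : 0 < ξ) (hm : 1 ≤ m)
    (hk1 : (1+ξ)*m ≤ k) (hk2 : k ≤ (1+ξ)*m+1) (hn : k+1 ≤ n) :
    ξ^2*m / (3*((n/(n+1))*(1-m/(n+1)) + ξ)) ≤
      (k-m+1)^2 / (2*(k*(1-k/n) + (k-m+1)/3)) := by
  have hmk : m < k := by nlinarith
  have hk0 : (0:ℝ) < k := by linarith
  have hn0 : (0:ℝ) < n := by linarith
  have hn1 : (0:ℝ) < n + 1 := by linarith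
  have hlam0 : (0:ℝ) < k - m + 1 := by linarith
  have hlam1 : ξ*m + 1 ≤ k - m + 1 := by nlinarith
  have hnm : 0 < n + 1 - m := by linarith
  have hceq : (n/(n+1))*(1-m/(n+1)) = n*(n+1-m)/(n+1)^2 := by
    rw [show (1:ℝ) - m/(n+1) = (n+1-m)/(n+1) from by field_simp, div_mul_div_comm, sq]
  have hc0 : 0 < n*(n+1-m)/(n+1)^2 := by
    apply div_pos (by nlinarith) (by positivity)
  have hA0 : 0 < k*(1-k/n) := by
    apply mul_pos hk0
    rw [sub_pos, div_lt_one hn0]; linarith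
  rw [hceq]
  rw [div_le_div_iff₀ (by positivity) (by positivity)]
  -- key inequality: 2*ξ*(k*(1-k/n)) ≤ (3*c + (7/3)*ξ)*(ξ*m+1) ≤ 3*lam*c + (7/3)*ξ*lam
  have hkk : k*(n-k) ≤ ((1+ξ)*m+1)*(n-(1+ξ)*m) := by
    apply mul_le_mul hk2 (by linarith) (by linarith) (by nlinarith)
  have hpoly := my_poly2 ξ m n hξ hm (by linarith)
  have key : 2*ξ*(k*(1-k/n)) ≤ (3*(n*(n+1-m)/(n+1)^2) + (7/3)*ξ)*(ξ*m+1) := by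
    rw [← sub_nonneg]
    have hexpand : (3*(n*(n+1-m)/(n+1)^2) + (7/3)*ξ)*(ξ*m+1) - 2*ξ*(k*(1-k/n)) =
        ((3*n^2*(n+1-m) + (7/3)*ξ*n*(n+1)^2)*(ξ*m+1) - 2*ξ*(k*(n-k))*(n+1)^2) /
          (n*(n+1)^2) := by
      field_simp
    rw [hexpand]
    apply div_nonneg _ (by positivity)
    have h2 : 2*ξ*(k*(n-k))*(n+1)^2 ≤ 2*ξ*((1+ξ)*m+1)*(n-(1+ξ)*m)*(n+1)^2 := by
      have := mul_le_mul_of_nonneg_left hkk (by positivity : (0:ℝ) ≤ 2*ξ)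
      nlinarith [this, sq_nonneg (n+1)]
    linarith
  have key2 : 2*ξ*(k*(1-k/n)) ≤
      3*(k-m+1)*(n*(n+1-m)/(n+1)^2) + (7/3)*ξ*(k-m+1) := by
    calc 2*ξ*(k*(1-k/n)) ≤ (3*(n*(n+1-m)/(n+1)^2) + (7/3)*ξ)*(ξ*m+1) := key
      _ ≤ (3*(n*(n+1-m)/(n+1)^2) + (7/3)*ξ)*(k-m+1) := by
          apply mul_le_mul_of_nonneg_left hlam1 (by positivity)
      _ = 3*(k-m+1)*(n*(n+1-m)/(n+1)^2) + (7/3)*ξ*(k-m+1) := by ring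
  -- now multiply by lam and assemble
  have hxm : ξ*m ≤ k-m+1 := by linarith
  nlinarith [mul_le_mul_of_nonneg_right key2 hlam0.le,
    mul_le_mul_of_nonneg_right hxm (mul_nonneg (mul_nonneg (by norm_num : (0:ℝ) ≤ 2) hξ.le) hA0.le),
    mul_le_mul_of_nonneg_right hxm (mul_nonneg hξ.le hlam0.le),
    mul_pos hc0 hlam0, sq_nonneg (k-m+1)]

lemma my_exp_alg {A lam : ℝ} (hA : 0 < A) (hlam : 0 < lam) :
    -((lam/(A+lam/3))*lam) + A*((lam/(A+lam/3))^2/(2*(1-(lam/(A+lam/3))/3))) =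
      -(lam^2/(2*(A+lam/3))) := by
  have hD : (0:ℝ) < A + lam/3 := by linarith
  have h13 : 1 - (lam/(A+lam/3))/3 = A/(A+lam/3) := by
    field_simp
    ring
  rw [h13, div_pow]
  field_simp
  ring

set_option maxHeartbeats 1000000 in
/-- Reiss-type tail bound for uniform order statistics: with
`K = ⌈(1+ξ)M⌉` and `U₍M₎` the `M`-th order statistic of `N₀` i.i.d. uniforms on `[0,1]`,
`P(U₍M₎ > K/N₀) ≤ exp{-ξM / ((3/ξ)[(N₀/(N₀+1))(1 - M/(N₀+1))] + 3)}`. -/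
theorem stmt17 {Ω : Type*} [MeasurableSpace Ω] (μ : Measure Ω) [IsProbabilityMeasure μ]
    (N0 M : ℕ) (hM : 1 ≤ M) (hMN : M ≤ N0) (ξ : ℝ) (hξ : 0 < ξ)
    (U : Fin N0 → Ω → ℝ) (hmeas : ∀ i, Measurable (U i))
    (hindep : ProbabilityTheory.iIndepFun U μ)
    (hlaw : ∀ i, μ.map (U i) = volume.restrict (Set.Icc (0 : ℝ) 1))
    (UM : Ω → ℝ)
    (hUM : ∀ ω, UM ω =
      sInf {t : ℝ | M ≤ (Finset.univ.filter (fun i => U i ω ≤ t)).card})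
    (K : ℕ) (hK : (K : ℝ) = ⌈(1 + ξ) * M⌉) :
    (μ {ω | (K : ℝ) / N0 < UM ω}).toReal ≤
      Real.exp ((-ξ * M) /
        ((3 / ξ) * (((N0 : ℝ) / (N0 + 1)) * (1 - (M : ℝ) / (N0 + 1))) + 3)) := by
  have hMr : (1:ℝ) ≤ (M:ℝ) := by exact_mod_cast hM
  have hN0 : 0 < N0 := lt_of_lt_of_le hM hMN
  have hn0 : (0:ℝ) < (N0:ℝ) := by exact_mod_cast hN0
  have hk1 : (1+ξ)*(M:ℝ) ≤ (K:ℝ) := by rw [hK]; exact Int.le_ceil _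
  have hk2 : (K:ℝ) ≤ (1+ξ)*(M:ℝ) + 1 := by rw [hK]; exact (Int.ceil_lt_add_one _).le
  have hMK : (M:ℝ) < (K:ℝ) := by nlinarith
  by_cases hcase : N0 ≤ K
  · -- degenerate case : K/N0 ≥ 1, the event is null
    have hbad : ∀ i, μ ((U i) ⁻¹' (Set.Icc (0:ℝ) 1))ᶜ = 0 := by
      intro i
      have h1 : μ ((U i) ⁻¹' (Set.Icc (0:ℝ) 1)) = 1 := by
        rw [← Measure.map_apply (hmeas i) measurableSet_Icc, hlaw i,
          Measure.restrict_apply measurableSet_Icc]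
        simp [Real.volume_Icc]
      rw [measure_compl ((hmeas i) measurableSet_Icc) (measure_ne_top μ _), h1,
        measure_univ, tsub_self]
    have hsub : {ω | (K:ℝ)/(N0:ℝ) < UM ω} ⊆ ⋃ i, ((U i) ⁻¹' (Set.Icc (0:ℝ) 1))ᶜ := by
      intro ω hω
      by_contra hmem
      simp only [Set.mem_iUnion, Set.mem_compl_iff, Set.mem_preimage, not_exists,
        not_not] at hmem
      have hUM1 : UM ω ≤ 1 := by
        rw [hUM ω]
        apply csInf_le
        · refine ⟨0, fun t ht => ?_⟩
          by_contra hneg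
          push_neg at hneg
          have hempty : (Finset.univ.filter (fun i => U i ω ≤ t)) = ∅ := by
            rw [Finset.eq_empty_iff_forall_notMem]
            intro i hi
            rw [Finset.mem_filter] at hi
            have := (hmem i).1
            linarith [hi.2]
          rw [Set.mem_setOf_eq, hempty] at ht
          simp at ht
          omega
        · show M ≤ (Finset.univ.filter (fun i => U i ω ≤ (1:ℝ))).card
          have : Finset.univ.filter (fun i => U i ω ≤ (1:ℝ)) = Finset.univ :=
            Finset.filter_true_of_mem (fun i _ => (hmem i).2)
          rw [this, Finset.card_univ, Fintype.card_fin]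
          exact hMN
      have h1K : (1:ℝ) ≤ (K:ℝ)/(N0:ℝ) := by
        rw [le_div_iff₀ hn0, one_mul]
        exact_mod_cast hcase
      rw [Set.mem_setOf_eq] at hω
      linarith
    have hz : μ {ω | (K:ℝ)/(N0:ℝ) < UM ω} = 0 :=
      measure_mono_null hsub (measure_iUnion_null fun i => hbad i)
    rw [hz]
    simp only [ENNReal.toReal_zero]
    exact (Real.exp_pos _).le
  · -- main case : K < N0
    push_neg at hcase
    have hKn : (K:ℝ) < (N0:ℝ) := by exact_mod_cast hcase
    have hKn1 : (K:ℝ) + 1 ≤ (N0:ℝ) := by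
      have : K + 1 ≤ N0 := hcase
      exact_mod_cast this
    set n : ℝ := (N0:ℝ) with hndef
    set p : ℝ := (K:ℝ)/n with hpdef
    have hK0 : (0:ℝ) < (K:ℝ) := by linarith
    have hp0 : 0 < p := div_pos hK0 hn0
    have hp1 : p < 1 := (div_lt_one hn0).mpr hKn
    -- the indicator variables
    set X : Fin N0 → Ω → ℝ :=
      fun i => (fun y : ℝ => if y ≤ p then (1:ℝ) else 0) ∘ U i with hXdef
    have hXmeas : ∀ i, Measurable (X i) := fun i =>
      (Measurable.ite measurableSet_Iic measurable_const measurable_const).comp (hmeas i)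
    have hXnonneg : ∀ i ω, 0 ≤ X i ω := by
      intro i ω
      simp only [hXdef, Function.comp_apply]
      split <;> norm_num
    set S : Ω → ℝ := ∑ i, X i with hSdef
    have hSapp : ∀ ω, S ω = ∑ i, X i ω := by
      intro ω; rw [hSdef, Finset.sum_apply]
    have hScard : ∀ ω, S ω = ((Finset.univ.filter (fun i => U i ω ≤ p)).card : ℝ) := by
      intro ω
      rw [hSapp ω]
      simp only [hXdef, Function.comp_apply]
      exact_mod_cast Finset.sum_boole _ _
    have hSmeas : Measurable S := by
      rw [hSdef, show (∑ i : Fin N0, X i) = (fun a => ∑ i : Fin N0, X i a) from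
        funext fun a => Finset.sum_apply _ _ _]
      exact Finset.measurable_sum Finset.univ (fun i _ => hXmeas i)
    have hSnonneg : ∀ ω, 0 ≤ S ω := fun ω => by
      rw [hSapp ω]; exact Finset.sum_nonneg fun i _ => hXnonneg i ω
    -- event inclusion
    have hsub : {ω | (K:ℝ)/(N0:ℝ) < UM ω} ⊆ {ω | S ω ≤ (M:ℝ) - 1} := by
      intro ω hω
      rw [Set.mem_setOf_eq] at hω ⊢
      have hcardlt : (Finset.univ.filter (fun i => U i ω ≤ p)).card < M := by
        by_contra hge
        push_neg at hge
        have hple : UM ω ≤ p := by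
          rw [hUM ω]
          by_cases hbdd : BddBelow {t : ℝ | M ≤ (Finset.univ.filter (fun i => U i ω ≤ t)).card}
          · exact csInf_le hbdd hge
          · rw [Real.sInf_of_not_bddBelow hbdd]; exact hp0.le
        exact absurd hω (not_lt.mpr hple)
      rw [hScard ω]
      have : (Finset.univ.filter (fun i => U i ω ≤ p)).card + 1 ≤ M := hcardlt
      have hcast : ((Finset.univ.filter (fun i => U i ω ≤ p)).card : ℝ) + 1 ≤ (M:ℝ) := by
        exact_mod_cast this
      linarith
    have hmono : (μ {ω | (K:ℝ)/(N0:ℝ) < UM ω}).toReal ≤ (μ {ω | S ω ≤ (M:ℝ)-1}).toReal :=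
      ENNReal.toReal_mono (measure_ne_top μ _) (measure_mono hsub)
    -- Bernstein parameters
    set lam : ℝ := (K:ℝ) - (M:ℝ) + 1 with hlamdef
    set A : ℝ := (K:ℝ) * (1 - p) with hAdef
    have hlam0 : 0 < lam := by rw [hlamdef]; linarith
    have hlam1 : ξ*(M:ℝ) + 1 ≤ lam := by rw [hlamdef]; nlinarith
    have hA0 : 0 < A := by
      rw [hAdef]; exact mul_pos hK0 (by linarith)
    set D : ℝ := A + lam/3 with hDdef
    have hD0 : 0 < D := by rw [hDdef]; positivity
    set t0 : ℝ := lam / D with ht0def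
    have ht00 : 0 < t0 := div_pos hlam0 hD0
    have ht03 : t0 < 3 := by
      rw [ht0def, div_lt_iff₀ hD0, hDdef]
      nlinarith
    set G : ℝ := Real.exp t0 - 1 - t0 with hGdef
    have hG0 : 0 ≤ G := by
      have := Real.add_one_le_exp t0
      rw [hGdef]; linarith
    -- integrability
    have hint : Integrable (fun ω => Real.exp ((-t0) * S ω)) μ := by
      apply Integrable.mono' (integrable_const (1:ℝ))
        (((hSmeas.const_mul (-t0)).exp).aestronglyMeasurable)
      apply Filter.Eventually.of_forall
      intro ω
      rw [Real.norm_eq_abs, abs_of_pos (Real.exp_pos _)]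
      rw [show (1:ℝ) = Real.exp 0 from (Real.exp_zero).symm]
      apply Real.exp_le_exp.mpr
      have := hSnonneg ω
      nlinarith
    -- Chernoff
    have hchern := ProbabilityTheory.measure_le_le_exp_mul_mgf (μ := μ) (X := S)
      ((M:ℝ)-1) (neg_nonpos.mpr ht00.le) hint
    -- independence of the indicators
    have hindepX : ProbabilityTheory.iIndepFun X μ := by
      rw [hXdef]
      exact hindep.comp _
        (fun i => Measurable.ite measurableSet_Iic measurable_const measurable_const)
    -- mgf of each factor
    have hmgf_i : ∀ i, ProbabilityTheory.mgf (X i) μ (-t0) = (1-p) + p * Real.exp (-t0) := by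
      intro i
      have hAi : MeasurableSet ((U i) ⁻¹' (Set.Iic p)) := (hmeas i) measurableSet_Iic
      have hfun : (fun ω => Real.exp ((-t0) * X i ω)) =
          fun ω => Set.indicator ((U i) ⁻¹' (Set.Iic p))
            (fun _ => Real.exp (-t0) - 1) ω + 1 := by
        funext ω
        by_cases h : U i ω ≤ p
        · rw [Set.indicator_of_mem (by simpa [Set.mem_preimage, Set.mem_Iic] using h)]
          simp only [hXdef, Function.comp_apply, if_pos h, mul_one]
          ring
        · rw [Set.indicator_of_notMem (by simpa [Set.mem_preimage, Set.mem_Iic] using h)]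
          simp only [hXdef, Function.comp_apply, if_neg h, mul_zero, Real.exp_zero]
          ring
      have hmeasp : μ ((U i) ⁻¹' (Set.Iic p)) = ENNReal.ofReal p := by
        rw [← Measure.map_apply (hmeas i) measurableSet_Iic, hlaw i,
          Measure.restrict_apply measurableSet_Iic]
        have hinter : Set.Iic p ∩ Set.Icc (0:ℝ) 1 = Set.Icc 0 p := by
          ext x
          simp only [Set.mem_inter_iff, Set.mem_Iic, Set.mem_Icc]
          constructor
          · rintro ⟨h1, h2, h3⟩; exact ⟨h2, h1⟩
          · rintro ⟨h1, h2⟩; exact ⟨h2, h1, by linarith⟩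
        rw [hinter, Real.volume_Icc, sub_zero]
      unfold ProbabilityTheory.mgf
      rw [hfun, integral_add ((integrable_const _).indicator hAi) (integrable_const 1),
        integral_indicator_const _ hAi, integral_const, measureReal_def, hmeasp,
        ENNReal.toReal_ofReal hp0.le, probReal_univ]
      simp only [smul_eq_mul, ENNReal.toReal_one, one_mul]
      ring
    -- assembling the mgf bound
    have hnp : n * p = (K:ℝ) := by
      rw [hpdef]; field_simp
    have hmgfS : ProbabilityTheory.mgf S μ (-t0) ≤ Real.exp (-((K:ℝ)*t0) + A*G) := by
      rw [hSdef, hindepX.mgf_sum hXmeas Finset.univ]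
      have hprod : (∏ i : Fin N0, ProbabilityTheory.mgf (X i) μ (-t0)) =
          ((1-p) + p*Real.exp (-t0))^N0 := by
        rw [Finset.prod_congr rfl (fun i _ => hmgf_i i), Finset.prod_const,
          Finset.card_univ, Fintype.card_fin]
      rw [hprod]
      have hb := my_mgf_factor_bound hp0.le hp1.le ht00.le
      calc ((1-p) + p*Real.exp (-t0))^N0
          ≤ (Real.exp (-(p*t0) + p*(1-p)*G))^N0 := by
            apply pow_le_pow_left₀
              (add_nonneg (by linarith) (mul_nonneg hp0.le (Real.exp_pos _).le))
            rw [hGdef]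
            exact hb
        _ = Real.exp ((N0:ℝ) * (-(p*t0) + p*(1-p)*G)) := by
            rw [Real.exp_nat_mul]
        _ = Real.exp (-((K:ℝ)*t0) + A*G) := by
            congr 1
            rw [hAdef, ← hnp, hndef]
            ring
    -- final exponent computation
    have hexp_eq : -(t0*lam) + A*(t0^2/(2*(1-t0/3))) = -(lam^2/(2*D)) := by
      rw [ht0def, hDdef]
      exact my_exp_alg hA0 hlam0
    have hfinal_exp : t0*((M:ℝ)-1) - (K:ℝ)*t0 + A*G ≤ -(lam^2/(2*D)) := by
      rw [← hexp_eq]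
      have h1 : t0*((M:ℝ)-1) - (K:ℝ)*t0 = -(t0*lam) := by rw [hlamdef]; ring
      rw [h1]
      have h2 : A*G ≤ A*(t0^2/(2*(1-t0/3))) :=
        mul_le_mul_of_nonneg_left (by rw [hGdef]; exact my_L_geom ht00.le ht03) hA0.le
      linarith
    -- Bernstein exponent vs target exponent
    have htarget : (-ξ * (M:ℝ)) /
        ((3 / ξ) * ((n / (n + 1)) * (1 - (M:ℝ) / (n + 1))) + 3) =
        -(ξ^2*(M:ℝ) / (3*((n/(n+1))*(1-(M:ℝ)/(n+1)) + ξ))) := by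
      have hc0' : 0 ≤ (n/(n+1))*(1-(M:ℝ)/(n+1)) := by
        apply mul_nonneg (by positivity)
        rw [sub_nonneg, div_le_one (by linarith)]
        have : (M:ℝ) ≤ n := by rw [hndef]; exact_mod_cast hMN
        linarith
      have hden1 : (3/ξ)*((n/(n+1))*(1-(M:ℝ)/(n+1))) + 3 =
          3*((n/(n+1))*(1-(M:ℝ)/(n+1)) + ξ)/ξ := by
        field_simp
      rw [hden1]
      rw [div_div_eq_mul_div]
      have hne : 3*((n/(n+1))*(1-(M:ℝ)/(n+1)) + ξ) ≠ 0 := by positivity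
      field_simp
    have hbern := my_bernstein_exponent_ineq (m := (M:ℝ)) (k := (K:ℝ)) (n := n)
      hξ hMr hk1 hk2 hKn1
    have hexp_le : -(lam^2/(2*D)) ≤ (-ξ * (M:ℝ)) /
        ((3 / ξ) * ((n / (n + 1)) * (1 - (M:ℝ) / (n + 1))) + 3) := by
      rw [htarget, neg_le_neg_iff]
      have hAeq : (K:ℝ)*(1 - (K:ℝ)/n) = A := by rw [hAdef, hpdef]
      calc ξ^2*(M:ℝ) / (3*((n/(n+1))*(1-(M:ℝ)/(n+1)) + ξ))
          ≤ ((K:ℝ)-(M:ℝ)+1)^2 / (2*((K:ℝ)*(1-(K:ℝ)/n) + ((K:ℝ)-(M:ℝ)+1)/3)) := hbern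
        _ = lam^2/(2*D) := by rw [hlamdef, hDdef, hAeq]
    -- putting everything together
    calc (μ {ω | (K:ℝ)/(N0:ℝ) < UM ω}).toReal
        ≤ (μ {ω | S ω ≤ (M:ℝ)-1}).toReal := hmono
      _ ≤ Real.exp (-(-t0) * ((M:ℝ)-1)) * ProbabilityTheory.mgf S μ (-t0) := hchern
      _ ≤ Real.exp (-(-t0) * ((M:ℝ)-1)) * Real.exp (-((K:ℝ)*t0) + A*G) := by
          apply mul_le_mul_of_nonneg_left hmgfS (Real.exp_pos _).le
      _ = Real.exp (t0*((M:ℝ)-1) - (K:ℝ)*t0 + A*G) := by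
          rw [← Real.exp_add]; congr 1; ring
      _ ≤ Real.exp (-(lam^2/(2*D))) := Real.exp_le_exp.mpr hfinal_exp
      _ ≤ Real.exp ((-ξ * (M:ℝ)) /
          ((3 / ξ) * ((n / (n + 1)) * (1 - (M:ℝ) / (n + 1))) + 3)) :=
          Real.exp_le_exp.mpr hexp_le
end
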